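/- Let A ∈ ℝ^{n×d} have rows aᵢᵀ, let H be symmetric positive definite with AᵀA ⪯ H, πᵢ > 0 with ∑πᵢ = 1, and Q a symmetric positive semidefinite matrix with H^{1/2} Q H^{1/2} ⪯ 6 I. Then ∑_{i=1}^n (aᵢᵀ Q aᵢ)² / πᵢ ≤ 36·ρ_max·d_eff·∑_{i=1}^n aᵢᵀH⁻¹aᵢ ≤ 36·ρ_max·d_eff², where ℓᵢ = aᵢᵀH⁻¹aᵢ, d_eff = ∑ᵢ ℓᵢ, and ρ_max = maxᵢ ℓᵢ/(πᵢ d_eff). -/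

import Mathlib

open Matrix

section

open scoped ComplexOrder

/-- The positive semidefinite square root of a positive semidefinite matrix
(the definition `Matrix.PosSemidef.sqrt` of the older Mathlib, removed since). -/
noncomputable def Matrix.PosSemidef.sqrt {n : Type*} [Fintype n] [DecidableEq n]
    {𝕜 : Type*} [RCLike 𝕜] {A : Matrix n n 𝕜} (hA : A.PosSemidef) : Matrix n n 𝕜 :=
  hA.1.eigenvectorUnitary.1 * diagonal ((↑) ∘ (Real.sqrt ∘ hA.1.eigenvalues)) *
    (star hA.1.eigenvectorUnitary : Matrix n n 𝕜)

end

open scoped ComplexOrder in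
theorem Matrix.PosSemidef.sqrt_mul_self {n : Type*} [Fintype n] [DecidableEq n]
    {𝕜 : Type*} [RCLike 𝕜] {A : Matrix n n 𝕜} (hA : A.PosSemidef) : hA.sqrt * hA.sqrt = A := by
  have hU : (star hA.1.eigenvectorUnitary : Matrix n n 𝕜) * hA.1.eigenvectorUnitary.1 = 1 :=
    Unitary.coe_star_mul_self _
  have hD : diagonal (((↑) : ℝ → 𝕜) ∘ (Real.sqrt ∘ hA.1.eigenvalues)) *
      diagonal ((↑) ∘ (Real.sqrt ∘ hA.1.eigenvalues)) = diagonal ((↑) ∘ hA.1.eigenvalues) := by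
    rw [diagonal_mul_diagonal]
    congr 1
    funext i
    simp only [Function.comp_apply]
    rw [← RCLike.ofReal_mul, Real.mul_self_sqrt (hA.eigenvalues_nonneg i)]
  unfold Matrix.PosSemidef.sqrt
  conv_rhs => rw [hA.1.spectral_theorem, Unitary.conjStarAlgAut_apply]
  calc _ = hA.1.eigenvectorUnitary.1 * diagonal (((↑) : ℝ → 𝕜) ∘ (Real.sqrt ∘ hA.1.eigenvalues)) *
        ((star hA.1.eigenvectorUnitary : Matrix n n 𝕜) * hA.1.eigenvectorUnitary.1) *
        diagonal ((↑) ∘ (Real.sqrt ∘ hA.1.eigenvalues)) *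
        (star hA.1.eigenvectorUnitary : Matrix n n 𝕜) := by simp only [Matrix.mul_assoc]
    _ = _ := by rw [hU, Matrix.mul_one, Matrix.mul_assoc _ (diagonal _) (diagonal _), hD]

open scoped ComplexOrder in
theorem Matrix.PosSemidef.posSemidef_sqrt {n : Type*} [Fintype n] [DecidableEq n]
    {𝕜 : Type*} [RCLike 𝕜] {A : Matrix n n 𝕜} (hA : A.PosSemidef) : hA.sqrt.PosSemidef := by
  unfold Matrix.PosSemidef.sqrt
  have hD : (diagonal (((↑) : ℝ → 𝕜) ∘ (Real.sqrt ∘ hA.1.eigenvalues))).PosSemidef :=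
    posSemidef_diagonal_iff.mpr fun i => RCLike.ofReal_nonneg.mpr (Real.sqrt_nonneg _)
  have := hD.mul_mul_conjTranspose_same (hA.1.eigenvectorUnitary.1)
  rwa [← star_eq_conjTranspose] at this

/-- Second-moment bound on sampled quadratic forms: if `AᵀA ⪯ H`,
`H^{1/2} Q H^{1/2} ⪯ 6 I` for p.s.d. `Q`, `ℓᵢ = aᵢᵀH⁻¹aᵢ`, `d_eff = ∑ ℓᵢ` and
`ρmax` bounds the ratios `ℓᵢ/(πᵢ d_eff)`, then
`∑ᵢ (aᵢᵀQaᵢ)²/πᵢ ≤ 36 ρmax d_eff ∑ᵢ aᵢᵀH⁻¹aᵢ ≤ 36 ρmax d_eff²`. -/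
theorem sampled_quadform_second_moment {n d : ℕ}
    (A : Matrix (Fin n) (Fin d) ℝ)
    (H : Matrix (Fin d) (Fin d) ℝ) (hH : H.PosDef)
    (hAH : (H - Aᵀ * A).PosSemidef)
    (π : Fin n → ℝ) (hπ : ∀ i, 0 < π i) (hsum : ∑ i, π i = 1)
    (Q : Matrix (Fin d) (Fin d) ℝ) (hQ : Q.PosSemidef)
    (hQle : ((6 : ℝ) • (1 : Matrix (Fin d) (Fin d) ℝ) -
      hH.posSemidef.sqrt * Q * hH.posSemidef.sqrt).PosSemidef)
    (ℓ : Fin n → ℝ) (hℓ : ∀ i, ℓ i = A i ⬝ᵥ (H⁻¹ *ᵥ A i))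
    (deff : ℝ) (hdeff : deff = ∑ i, ℓ i)
    (ρmax : ℝ) (hρ : ∀ i, ℓ i / (π i * deff) ≤ ρmax) :
    ∑ i, (A i ⬝ᵥ (Q *ᵥ A i)) ^ 2 / π i ≤
        36 * ρmax * deff * ∑ i, A i ⬝ᵥ (H⁻¹ *ᵥ A i) ∧
    36 * ρmax * deff * (∑ i, A i ⬝ᵥ (H⁻¹ *ᵥ A i)) ≤ 36 * ρmax * deff ^ 2 := by
  set S := hH.posSemidef.sqrt with hSdef
  have hSpsd : S.PosSemidef := hH.posSemidef.posSemidef_sqrt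
  have hSS : S * S = H := hH.posSemidef.sqrt_mul_self
  have hSsym : Sᵀ = S := hSpsd.1
  have hdetS : S.det ≠ 0 := by
    intro h
    apply hH.det_pos.ne'
    rw [← hSS, det_mul, h, mul_zero]
  have hSinv : S * S⁻¹ = 1 := mul_nonsing_inv S (isUnit_iff_ne_zero.mpr hdetS)
  have hHinv : H⁻¹ = S⁻¹ * S⁻¹ := by rw [← hSS, Matrix.mul_inv_rev]
  have hSinvsym : (S⁻¹)ᵀ = S⁻¹ := by rw [Matrix.transpose_nonsing_inv, hSsym]
  -- key pointwise bound: aᵀ Q a ≤ 6 aᵀ H⁻¹ a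
  have key : ∀ a : Fin d → ℝ, a ⬝ᵥ (Q *ᵥ a) ≤ 6 * (a ⬝ᵥ (H⁻¹ *ᵥ a)) := by
    intro a
    set y := S⁻¹ *ᵥ a with hy
    have hSy : S *ᵥ y = a := by
      rw [hy, mulVec_mulVec, hSinv, one_mulVec]
    have hvm : y ᵥ* S = S *ᵥ y := by rw [← vecMul_transpose, hSsym]
    have hvm2 : a ᵥ* S⁻¹ = S⁻¹ *ᵥ a := by rw [← vecMul_transpose, hSinvsym]
    have h1 : y ⬝ᵥ ((S * Q * S) *ᵥ y) = a ⬝ᵥ (Q *ᵥ a) := by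
      rw [mul_assoc, ← mulVec_mulVec, dotProduct_mulVec, hvm, hSy,
        mulVec_mulVec, mul_assoc, hSinv, mul_one]
    have h2 : a ⬝ᵥ (H⁻¹ *ᵥ a) = y ⬝ᵥ y := by
      rw [hHinv, ← mulVec_mulVec, ← hy, dotProduct_mulVec, hvm2, ← hy]
    have h6 := hQle.dotProduct_mulVec_nonneg y
    simp only [star_trivial, sub_mulVec, dotProduct_sub, smul_mulVec,
      one_mulVec, dotProduct_smul, smul_eq_mul] at h6
    rw [← h1, h2]
    linarith
  have hℓnn : ∀ i, 0 ≤ ℓ i := by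
    intro i
    rw [hℓ i]
    simpa using (hH.inv).posSemidef.dotProduct_mulVec_nonneg (A i)
  have hdnn : 0 ≤ deff := hdeff ▸ Finset.sum_nonneg fun i _ => hℓnn i
  have hQnn : ∀ i, 0 ≤ A i ⬝ᵥ (Q *ᵥ A i) := by
    intro i; simpa using hQ.dotProduct_mulVec_nonneg (A i)
  have hterm : ∀ i, (A i ⬝ᵥ (Q *ᵥ A i)) ^ 2 / π i ≤ 36 * ρmax * deff * ℓ i := by
    intro i
    have hx : A i ⬝ᵥ (Q *ᵥ A i) ≤ 6 * ℓ i := by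
      rw [hℓ i]; exact key (A i)
    rcases eq_or_lt_of_le hdnn with hd0 | hdpos
    · have hall : ℓ i = 0 := by
        have := Finset.sum_eq_zero_iff_of_nonneg (fun j _ => hℓnn j) |>.mp
          (hdeff ▸ hd0.symm) i (Finset.mem_univ i)
        exact this
      have hx0 : A i ⬝ᵥ (Q *ᵥ A i) = 0 := le_antisymm (by rw [hall] at hx; linarith) (hQnn i)
      rw [hx0, hall]
      simp
    · have hratio : ℓ i ≤ ρmax * (π i * deff) :=
        (div_le_iff₀ (mul_pos (hπ i) hdpos)).mp (hρ i)
      have hxsq : (A i ⬝ᵥ (Q *ᵥ A i)) ^ 2 ≤ 36 * ℓ i ^ 2 := by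
        nlinarith [hQnn i, hℓnn i]
      rw [div_le_iff₀ (hπ i)]
      nlinarith [hℓnn i, hℓnn i, sq_nonneg (ℓ i), hπ i, hdpos]
  constructor
  · have hsumH : ∑ i, A i ⬝ᵥ (H⁻¹ *ᵥ A i) = ∑ i, ℓ i := by
      exact Finset.sum_congr rfl fun i _ => (hℓ i).symm
    rw [hsumH, Finset.mul_sum]
    exact Finset.sum_le_sum fun i _ => hterm i
  · have hsumH : ∑ i, A i ⬝ᵥ (H⁻¹ *ᵥ A i) = deff := by
      rw [hdeff]; exact Finset.sum_congr rfl fun i _ => (hℓ i).symm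
    rw [hsumH]; apply le_of_eq; ring
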